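/- For λ ∈ ℂ, the automorphism group of the 3-dimensional algebra T³₀₁(λ) over ℂ (basis e₁,e₂,e₃ with nonzero products e₁e₁ = e₂, e₁e₂ = λe₃, e₂e₁ = e₃) consists exactly of the linear maps whose matrix in the basis (e₁,e₂,e₃) has the form [[x,0,0],[y,x²,0],[z,(λ+1)xy,x³]] with x ≠ 0. -/
import Mathlib


/-- T³₀₁(λ): basis `e₁,e₂,e₃`, nonzero products `e₁e₁ = e₂`, `e₁e₂ = λe₃`, `e₂e₁ = e₃`. -/
def mulT301 (lam : ℂ) (a b : Fin 3 → ℂ) : Fin 3 → ℂ :=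
  (a 0 * b 0) • (Pi.single 1 1 : Fin 3 → ℂ)
    + (lam * (a 0 * b 1) + a 1 * b 0) • (Pi.single 2 1 : Fin 3 → ℂ)

lemma decomp3 (v : Fin 3 → ℂ) :
    v = v 0 • (Pi.single 0 1 : Fin 3 → ℂ) + v 1 • (Pi.single 1 1 : Fin 3 → ℂ)
      + v 2 • (Pi.single 2 1 : Fin 3 → ℂ) := by
  funext i; fin_cases i <;> simp [Pi.single_apply]

/-- The automorphisms of T³₀₁(λ) are exactly the linear bijections with matrix
`[[x,0,0],[y,x²,0],[z,(λ+1)xy,x³]]` with `x ≠ 0`. -/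
theorem stmt14 (lam : ℂ) (φ : (Fin 3 → ℂ) ≃ₗ[ℂ] (Fin 3 → ℂ)) :
    (∀ a b, φ (mulT301 lam a b) = mulT301 lam (φ a) (φ b)) ↔
    ∃ x y z : ℂ, x ≠ 0 ∧
      φ (Pi.single 0 1) = x • (Pi.single 0 1 : Fin 3 → ℂ) + y • (Pi.single 1 1 : Fin 3 → ℂ)
        + z • (Pi.single 2 1 : Fin 3 → ℂ) ∧
      φ (Pi.single 1 1) = (x ^ 2) • (Pi.single 1 1 : Fin 3 → ℂ)
        + ((lam + 1) * x * y) • (Pi.single 2 1 : Fin 3 → ℂ) ∧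
      φ (Pi.single 2 1) = (x ^ 3) • (Pi.single 2 1 : Fin 3 → ℂ) := by
  constructor
  · intro h
    set x := φ (Pi.single 0 1) 0 with hxdef
    set y := φ (Pi.single 0 1) 1 with hydef
    set z := φ (Pi.single 0 1) 2 with hzdef
    have he1 : φ (Pi.single 1 1) = (x ^ 2) • (Pi.single 1 1 : Fin 3 → ℂ)
        + ((lam + 1) * x * y) • (Pi.single 2 1 : Fin 3 → ℂ) := by
      have h0 := h (Pi.single 0 1) (Pi.single 0 1)
      have e : mulT301 lam (Pi.single 0 1) (Pi.single 0 1) = (Pi.single 1 1 : Fin 3 → ℂ) := by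
        funext i; fin_cases i <;> simp [mulT301, Pi.single_apply]
      rw [e] at h0
      rw [h0]
      funext i; fin_cases i <;> simp [mulT301, Pi.single_apply, hxdef, hydef] <;> ring
    have he2 : φ (Pi.single 2 1) = (x ^ 3) • (Pi.single 2 1 : Fin 3 → ℂ) := by
      have h0 := h (Pi.single 1 1) (Pi.single 0 1)
      have e : mulT301 lam (Pi.single 1 1) (Pi.single 0 1) = (Pi.single 2 1 : Fin 3 → ℂ) := by
        funext i; fin_cases i <;> simp [mulT301, Pi.single_apply]
      rw [e] at h0
      rw [h0, he1]
      funext i; fin_cases i <;> simp [mulT301, Pi.single_apply, hxdef] <;> ring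
    refine ⟨x, y, z, ?_, ?_, he1, he2⟩
    · intro hx0
      have hz1 : φ (Pi.single 1 1) = 0 := by
        rw [he1, hx0]; simp
      have := φ.injective (hz1.trans (map_zero φ).symm)
      have := congrFun this 1
      simp at this
    · have := decomp3 (φ (Pi.single 0 1))
      rw [← hxdef, ← hydef, ← hzdef] at this
      exact this
  · rintro ⟨x, y, z, hx, h0, h1, h2⟩ a b
    have ha : φ a = (a 0) • φ (Pi.single 0 1) + (a 1) • φ (Pi.single 1 1)
        + (a 2) • φ (Pi.single 2 1) := by
      conv_lhs => rw [decomp3 a]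
      simp
    have hb : φ b = (b 0) • φ (Pi.single 0 1) + (b 1) • φ (Pi.single 1 1)
        + (b 2) • φ (Pi.single 2 1) := by
      conv_lhs => rw [decomp3 b]
      simp
    have key : φ (mulT301 lam a b) = (a 0 * b 0) • φ (Pi.single 1 1)
        + (lam * (a 0 * b 1) + a 1 * b 0) • φ (Pi.single 2 1) := by
      simp [mulT301]
    rw [key, ha, hb, h0, h1, h2]
    funext i; fin_cases i <;> simp [mulT301, Pi.single_apply] <;> ring
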